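/- arXiv:math/0503550 — 2 statements merged into one kernel-verified Lean document; each statement's English description precedes it below -/
import Mathlib

section
/- In the one-period model on Ω = (0,1], let f : Ω → ℝ take the value 1 on J_n^1 and −n on J_n^2 for every n ≥ 1. Then: (i) for every separating measure Q (i.e., every probability Q ≪ P with density satisfying q₁(n) = n·q₂(n) for all n), f ∈ L¹(Q) and E_Q[f] = 0; (ii) for x ∈ ℝ, there exists an admissible strategy α with x + α·X₁ ≥ f P-a.s. if and only if x ≥ 1. In particular the super replication price of f equals 1 while sup over separating measures Q of E_Q[f] equals 0. -/
open MeasureTheory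

/-- `P`: Lebesgue measure restricted to `Ω = (0,1]`. -/
noncomputable def Pmeas : Measure ℝ := MeasureTheory.volume.restrict (Set.Ioc 0 1)

/-- `I_n = (2^{-n}, 2^{-(n-1)}]` (intended for `n ≥ 1`). -/
def Iset (n : ℕ) : Set ℝ := Set.Ioc ((2 : ℝ) ^ n)⁻¹ ((2 : ℝ) ^ (n - 1))⁻¹

/-- `J_n^1 = (2^{-n}, 3·2^{-(n+1)}]`. -/
def J1 (n : ℕ) : Set ℝ := Set.Ioc ((2 : ℝ) ^ n)⁻¹ (3 * ((2 : ℝ) ^ (n + 1))⁻¹)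

/-- `J_n^2 = (3·2^{-(n+1)}, 2^{-(n-1)}]`. -/
def J2 (n : ℕ) : Set ℝ := Set.Ioc (3 * ((2 : ℝ) ^ (n + 1))⁻¹) ((2 : ℝ) ^ (n - 1))⁻¹

/-- A strategy: a function constant, equal to some `a n`, on each `I_n`. -/
def IsStrategy (α : ℝ → ℝ) : Prop :=
  ∃ a : ℕ → ℝ, ∀ n : ℕ, 1 ≤ n → ∀ ω ∈ Iset n, α ω = a n

/-- An admissible strategy: a strategy whose gain `α·X₁` is bounded below by a constant
`-c`, `P`-a.s. -/
def IsAdmissible (X₁ α : ℝ → ℝ) : Prop :=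
  IsStrategy α ∧ ∃ c : ℝ, 0 ≤ c ∧ ∀ᵐ ω ∂Pmeas, -c ≤ α ω * X₁ ω

/-- The separating measures of the one-period model, described through their densities:
probabilities `Q ≪ P` with density constantly `q₁ n` on `J_n^1`, `q₂ n` on `J_n^2` and
`q₁ n = n · q₂ n` for all `n ≥ 1`. -/
def SepD : Set (Measure ℝ) :=
  {Q | IsProbabilityMeasure Q ∧ ∃ q₁ q₂ : ℕ → ℝ, (∀ n, 0 ≤ q₁ n) ∧ (∀ n, 0 ≤ q₂ n) ∧
    (∀ n : ℕ, 1 ≤ n → q₁ n = (n : ℝ) * q₂ n) ∧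
    ∃ d : ℝ → ℝ, Measurable d ∧
      (∀ n : ℕ, 1 ≤ n → (∀ ω ∈ J1 n, d ω = q₁ n) ∧ (∀ ω ∈ J2 n, d ω = q₂ n)) ∧
      Q = Pmeas.withDensity (fun ω => ENNReal.ofReal (d ω))}


lemma pow1_inv (m : ℕ) : ((2:ℝ)^(m+1))⁻¹ = ((2:ℝ)^m)⁻¹ / 2 := by
  rw [pow_succ, mul_inv, div_eq_mul_inv]

lemma pow2_inv (m : ℕ) : ((2:ℝ)^(m+2))⁻¹ = ((2:ℝ)^m)⁻¹ / 4 := by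
  rw [pow_succ, pow_succ, mul_inv, mul_inv, div_eq_mul_inv, mul_assoc, ← mul_inv]
  norm_num

lemma upos (m : ℕ) : (0:ℝ) < ((2:ℝ)^m)⁻¹ := by positivity

lemma ule1 (m : ℕ) : ((2:ℝ)^m)⁻¹ ≤ 1 := by
  rw [inv_le_one_iff₀]; right; exact one_le_pow₀ (by norm_num)

lemma Iset_succ (m : ℕ) : Iset (m+1) = Set.Ioc (((2:ℝ)^m)⁻¹/2) ((2:ℝ)^m)⁻¹ := by
  simp [Iset, pow1_inv]

lemma J1_succ (m : ℕ) : J1 (m+1) = Set.Ioc (((2:ℝ)^m)⁻¹/2) (3 * (((2:ℝ)^m)⁻¹/4)) := by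
  simp only [J1, pow2_inv, pow1_inv]

lemma J2_succ (m : ℕ) : J2 (m+1) = Set.Ioc (3 * (((2:ℝ)^m)⁻¹/4)) ((2:ℝ)^m)⁻¹ := by
  simp only [J2, pow2_inv]; norm_num

lemma J1_subset_Iset (m : ℕ) : J1 (m+1) ⊆ Iset (m+1) := by
  rw [J1_succ, Iset_succ]
  exact Set.Ioc_subset_Ioc le_rfl (by have := upos m; linarith)

lemma J2_subset_Iset (m : ℕ) : J2 (m+1) ⊆ Iset (m+1) := by
  rw [J2_succ, Iset_succ]
  exact Set.Ioc_subset_Ioc (by have := upos m; linarith) le_rfl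

lemma J1_disj_J2 (n : ℕ) : Disjoint (J1 n) (J2 n) := by
  rw [Set.disjoint_left]
  rintro ω ⟨_, h2⟩ ⟨h3, _⟩; linarith

lemma Iset_union (m : ℕ) : Iset (m+1) = J1 (m+1) ∪ J2 (m+1) := by
  rw [J1_succ, Iset_succ, J2_succ, Set.Ioc_union_Ioc_eq_Ioc]
  · have := upos m; linarith
  · have := upos m; linarith

lemma Iset_subset (m : ℕ) : Iset (m+1) ⊆ Set.Ioc 0 1 := by
  rw [Iset_succ]
  exact Set.Ioc_subset_Ioc (by have := upos m; positivity) (ule1 m)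

lemma Iset_zero : Iset 0 = ∅ := by
  simp [Iset]

lemma Iset_pairwise : Pairwise (Function.onFun Disjoint Iset) := by
  have key : ∀ m n : ℕ, m < n → Disjoint (Iset m) (Iset n) := by
    intro m n hmn
    rw [Set.disjoint_left]
    rintro ω ⟨h1, _⟩ ⟨_, h4⟩
    have hle : ((2:ℝ)^(n-1))⁻¹ ≤ ((2:ℝ)^m)⁻¹ := by
      apply inv_anti₀ (by positivity)
      exact pow_le_pow_right₀ (by norm_num) (by omega)
    linarith
  intro m n hmn
  rcases lt_or_gt_of_ne hmn with h | h
  · exact key m n h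
  · exact (key n m h).symm

lemma iUnion_Iset : (⋃ n, Iset n) = Set.Ioc 0 1 := by
  apply Set.Subset.antisymm
  · apply Set.iUnion_subset
    intro n
    cases n with
    | zero => rw [Iset_zero]; exact Set.empty_subset _
    | succ m => exact Iset_subset m
  · intro ω hω
    have hex : ∃ n : ℕ, ((2:ℝ)^n)⁻¹ < ω := by
      obtain ⟨n, hn⟩ := exists_pow_lt_of_lt_one hω.1 (by norm_num : (2:ℝ)⁻¹ < 1)
      exact ⟨n, by rwa [inv_pow] at hn⟩
    classical
    set n := Nat.find hex with hn_def
    have hn : ((2:ℝ)^n)⁻¹ < ω := Nat.find_spec hex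
    have hn0 : n ≠ 0 := by
      intro h
      rw [h] at hn; simp at hn; linarith [hω.2]
    obtain ⟨m, hm⟩ : ∃ m, n = m + 1 := ⟨n - 1, by omega⟩
    have hmin : ¬ ((2:ℝ)^m)⁻¹ < ω := Nat.find_min hex (by omega)
    refine Set.mem_iUnion.2 ⟨m + 1, ?_⟩
    rw [← hm]
    exact ⟨hn, by rw [hm]; simpa using not_lt.1 hmin⟩

lemma measJ1 : ∀ m : ℕ, MeasurableSet (J1 m) := fun m => measurableSet_Ioc
lemma measJ2 : ∀ m : ℕ, MeasurableSet (J2 m) := fun m => measurableSet_Ioc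
lemma measIset : ∀ m : ℕ, MeasurableSet (Iset m) := fun m => measurableSet_Ioc

lemma vol_J1 (m : ℕ) : volume (J1 (m+1)) = ENNReal.ofReal (((2:ℝ)^m)⁻¹/4) := by
  rw [J1_succ, Real.volume_Ioc]; congr 1; ring

lemma vol_J2 (m : ℕ) : volume (J2 (m+1)) = ENNReal.ofReal (((2:ℝ)^m)⁻¹/4) := by
  rw [J2_succ, Real.volume_Ioc]; congr 1; ring
lemma Pmeas_J1 (m : ℕ) : Pmeas (J1 (m+1)) = ENNReal.ofReal (((2:ℝ)^m)⁻¹/4) := by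
  rw [Pmeas, Measure.restrict_apply (measJ1 _),
    Set.inter_eq_left.2 ((J1_subset_Iset m).trans (Iset_subset m)), vol_J1]

lemma Pmeas_J2 (m : ℕ) : Pmeas (J2 (m+1)) = ENNReal.ofReal (((2:ℝ)^m)⁻¹/4) := by
  rw [Pmeas, Measure.restrict_apply (measJ2 _),
    Set.inter_eq_left.2 ((J2_subset_Iset m).trans (Iset_subset m)), vol_J2]

lemma exists_mem_of_ae {s : Set ℝ} (hs : Pmeas s ≠ 0) {p : ℝ → Prop}
    (hp : ∀ᵐ ω ∂Pmeas, p ω) : ∃ ω ∈ s, p ω := by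
  by_contra h
  push_neg at h
  exact hs (measure_mono_null (fun ω hω => h ω hω) (ae_iff.1 hp))

lemma ae_mem_Ioc : ∀ᵐ ω ∂Pmeas, ω ∈ Set.Ioc (0:ℝ) 1 := ae_restrict_mem measurableSet_Ioc

lemma integrableOn_of_const {s : Set ℝ} (hs : MeasurableSet s) (hfin : volume s ≠ ⊤)
    {g : ℝ → ℝ} {c : ℝ} (h : ∀ ω ∈ s, g ω = c) : IntegrableOn g s volume := by
  have hc : IntegrableOn (fun _ => c) s volume := integrableOn_const hfin
  exact hc.congr ((ae_restrict_iff' hs).2 (ae_of_all _ fun ω hω => (h ω hω).symm))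

lemma setIntegral_of_const {s : Set ℝ} (hs : MeasurableSet s) {g : ℝ → ℝ} {c : ℝ}
    (h : ∀ ω ∈ s, g ω = c) : ∫ ω in s, g ω ∂volume = (volume s).toReal * c := by
  rw [setIntegral_congr_fun hs h, setIntegral_const, smul_eq_mul, measureReal_def]

lemma setLIntegral_of_const {s : Set ℝ} (hs : MeasurableSet s) {g : ℝ → ENNReal} {c : ENNReal}
    (h : ∀ ω ∈ s, g ω = c) : ∫⁻ ω in s, g ω ∂volume = c * volume s := by
  rw [setLIntegral_congr_fun hs (g := fun _ => c) h, setLIntegral_const]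


lemma d_nonneg_on {d : ℝ → ℝ} {q₁ q₂ : ℕ → ℝ} (hq₁ : ∀ n, 0 ≤ q₁ n) (hq₂ : ∀ n, 0 ≤ q₂ n)
    (hd : ∀ n : ℕ, 1 ≤ n → (∀ ω ∈ J1 n, d ω = q₁ n) ∧ (∀ ω ∈ J2 n, d ω = q₂ n)) :
    ∀ ω ∈ Set.Ioc (0:ℝ) 1, 0 ≤ d ω := by
  intro ω hω
  rw [← iUnion_Iset] at hω
  obtain ⟨n, hn⟩ := Set.mem_iUnion.1 hω
  cases n with
  | zero => rw [Iset_zero] at hn; exact absurd hn (Set.notMem_empty ω)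
  | succ m =>
    rw [Iset_union] at hn
    rcases hn with h | h
    · rw [(hd (m+1) (by omega)).1 ω h]; exact hq₁ _
    · rw [(hd (m+1) (by omega)).2 ω h]; exact hq₂ _

lemma sep_integral (f : ℝ → ℝ)
    (hf : ∀ n : ℕ, 1 ≤ n → (∀ ω ∈ J1 n, f ω = 1) ∧ (∀ ω ∈ J2 n, f ω = -(n : ℝ))) :
    ∀ Q ∈ SepD, Integrable f Q ∧ ∫ ω, f ω ∂Q = 0 := by
  rintro Q ⟨hQprob, q₁, q₂, hq₁, hq₂, hq, d, hd_meas, hd, rfl⟩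
  set g : ℝ → ℝ := fun ω => f ω * d ω with hg_def
  have hdnn := d_nonneg_on hq₁ hq₂ hd
  have hgJ1 : ∀ m : ℕ, ∀ ω ∈ J1 (m+1), g ω = q₁ (m+1) := by
    intro m ω hω
    simp only [hg_def]
    rw [(hf (m+1) (by omega)).1 ω hω, (hd (m+1) (by omega)).1 ω hω, one_mul]
  have hgJ2 : ∀ m : ℕ, ∀ ω ∈ J2 (m+1), g ω = -(((m:ℝ)+1) * q₂ (m+1)) := by
    intro m ω hω
    simp only [hg_def]
    rw [(hf (m+1) (by omega)).2 ω hω, (hd (m+1) (by omega)).2 ω hω]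
    push_cast; ring
  -- a.e. strong measurability of g
  have hPm : Pmeas = volume.restrict (⋃ n, Iset n) := by rw [iUnion_Iset]; rfl
  have hAESM : AEStronglyMeasurable g Pmeas := by
    rw [hPm, aestronglyMeasurable_iUnion_iff]
    intro n
    cases n with
    | zero => rw [Iset_zero, Measure.restrict_empty]; exact aestronglyMeasurable_zero_measure _
    | succ m =>
      rw [Iset_union, aestronglyMeasurable_union_iff]
      constructor
      · exact aestronglyMeasurable_const.congr
          ((ae_restrict_iff' (measJ1 _)).2 (ae_of_all _ fun ω hω => (hgJ1 m ω hω).symm))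
      · exact aestronglyMeasurable_const.congr
          ((ae_restrict_iff' (measJ2 _)).2 (ae_of_all _ fun ω hω => (hgJ2 m ω hω).symm))
  -- finite integral of g
  classical
  set S : ℕ → Set ℝ := fun n => if n = 0 then (∅ : Set ℝ) else J1 n with hS_def
  have hS_sub : ∀ n, S n ⊆ Iset n := by
    intro n
    cases n with
    | zero => simp [hS_def]
    | succ m => simpa [hS_def] using J1_subset_Iset m
  have hS_meas : ∀ n, MeasurableSet (S n) := by
    intro n; cases n with
    | zero => simp [hS_def]
    | succ m => simpa [hS_def] using measJ1 (m+1)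
  have hS_pw : Pairwise (Function.onFun Disjoint S) :=
    fun i j hij => (Iset_pairwise hij).mono (hS_sub i) (hS_sub j)
  have hQuniv : ∫⁻ ω in Set.Ioc (0:ℝ) 1, ENNReal.ofReal (d ω) ∂volume = 1 := by
    have h1 : (Pmeas.withDensity (fun ω => ENNReal.ofReal (d ω))) Set.univ = 1 :=
      hQprob.measure_univ
    rwa [withDensity_apply _ MeasurableSet.univ, Measure.restrict_univ, Pmeas] at h1
  have hterm : ∀ n : ℕ, ∫⁻ ω in Iset n, ENNReal.ofReal ‖g ω‖ ∂volume
      = 2 * ∫⁻ ω in S n, ENNReal.ofReal (d ω) ∂volume := by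
    intro n
    cases n with
    | zero => rw [Iset_zero]; simp [hS_def]
    | succ m =>
      have hJ1 : ∫⁻ ω in J1 (m+1), ENNReal.ofReal ‖g ω‖ ∂volume
          = ENNReal.ofReal (q₁ (m+1)) * volume (J1 (m+1)) := by
        apply setLIntegral_of_const (measJ1 _)
        intro ω hω
        rw [hgJ1 m ω hω, Real.norm_of_nonneg (hq₁ _)]
      have hJ2 : ∫⁻ ω in J2 (m+1), ENNReal.ofReal ‖g ω‖ ∂volume
          = ENNReal.ofReal (q₁ (m+1)) * volume (J2 (m+1)) := by
        apply setLIntegral_of_const (measJ2 _)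
        intro ω hω
        rw [hgJ2 m ω hω, norm_neg, Real.norm_of_nonneg (mul_nonneg (by positivity) (hq₂ _)),
          hq (m+1) (by omega)]
        push_cast; ring_nf
      have hD : ∫⁻ ω in S (m+1), ENNReal.ofReal (d ω) ∂volume
          = ENNReal.ofReal (q₁ (m+1)) * volume (J1 (m+1)) := by
        have : S (m+1) = J1 (m+1) := by simp [hS_def]
        rw [this]
        apply setLIntegral_of_const (measJ1 _)
        intro ω hω
        rw [(hd (m+1) (by omega)).1 ω hω]
      rw [Iset_union, lintegral_union (measJ2 _) (J1_disj_J2 _), hJ1, hJ2, hD,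
        vol_J1, vol_J2]
      ring
  have hfin : HasFiniteIntegral g Pmeas := by
    rw [hasFiniteIntegral_iff_norm, hPm, lintegral_iUnion measIset Iset_pairwise]
    calc ∑' n, ∫⁻ ω in Iset n, ENNReal.ofReal ‖g ω‖ ∂volume
        = ∑' n, 2 * ∫⁻ ω in S n, ENNReal.ofReal (d ω) ∂volume := by
          exact tsum_congr hterm
      _ = 2 * ∑' n, ∫⁻ ω in S n, ENNReal.ofReal (d ω) ∂volume := ENNReal.tsum_mul_left
      _ = 2 * ∫⁻ ω in ⋃ n, S n, ENNReal.ofReal (d ω) ∂volume := by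
          rw [lintegral_iUnion hS_meas hS_pw]
      _ ≤ 2 * ∫⁻ ω in Set.Ioc (0:ℝ) 1, ENNReal.ofReal (d ω) ∂volume := by
          gcongr
          apply Set.iUnion_subset
          intro n
          exact (hS_sub n).trans (by rw [← iUnion_Iset]; exact Set.subset_iUnion _ n)
      _ = 2 := by rw [hQuniv, mul_one]
      _ < ⊤ := by norm_num
  have hInt_g : Integrable g Pmeas := ⟨hAESM, hfin⟩
  -- integrability of f wrt Q
  have hae_eq : g =ᵐ[Pmeas] fun x => f x * (ENNReal.ofReal (d x)).toReal := by
    filter_upwards [ae_mem_Ioc] with ω hω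
    rw [ENNReal.toReal_ofReal (hdnn ω hω)]
  have hIf : Integrable f (Pmeas.withDensity (fun ω => ENNReal.ofReal (d ω))) := by
    rw [integrable_withDensity_iff hd_meas.ennreal_ofReal
      (ae_of_all _ fun ω => ENNReal.ofReal_lt_top)]
    exact hInt_g.congr hae_eq
  refine ⟨hIf, ?_⟩
  -- the integral
  have hint_g : ∫ ω, g ω ∂Pmeas = 0 := by
    have h1 : ∫ ω, g ω ∂Pmeas = ∑' n, ∫ ω in Iset n, g ω ∂volume := by
      rw [hPm]
      exact integral_iUnion measIset Iset_pairwise (by rwa [hPm] at hInt_g)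
    rw [h1]
    have h2 : ∀ n : ℕ, ∫ ω in Iset n, g ω ∂volume = 0 := by
      intro n
      cases n with
      | zero => rw [Iset_zero, Measure.restrict_empty, integral_zero_measure]
      | succ m =>
        have int1 : IntegrableOn g (J1 (m+1)) volume :=
          integrableOn_of_const (measJ1 _) (by rw [vol_J1]; exact ENNReal.ofReal_ne_top) (hgJ1 m)
        have int2 : IntegrableOn g (J2 (m+1)) volume :=
          integrableOn_of_const (measJ2 _) (by rw [vol_J2]; exact ENNReal.ofReal_ne_top) (hgJ2 m)
        rw [Iset_union, setIntegral_union (J1_disj_J2 _) (measJ2 _) int1 int2,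
          setIntegral_of_const (measJ1 _) (hgJ1 m), setIntegral_of_const (measJ2 _) (hgJ2 m),
          vol_J1, vol_J2, hq (m+1) (by omega)]
        push_cast
        ring
    simp [h2]
  have hsmul : ∫ ω, f ω ∂(Pmeas.withDensity (fun ω => ENNReal.ofReal (d ω)))
      = ∫ ω, (Real.toNNReal (d ω)) • f ω ∂Pmeas :=
    integral_withDensity_eq_integral_smul hd_meas.real_toNNReal f
  rw [hsmul, ← hint_g]
  apply integral_congr_ae
  filter_upwards [ae_mem_Ioc] with ω hω
  rw [NNReal.smul_def, Real.coe_toNNReal _ (hdnn ω hω), hg_def]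
  exact mul_comm _ _
lemma f_le_one {f : ℝ → ℝ}
    (hf : ∀ n : ℕ, 1 ≤ n → (∀ ω ∈ J1 n, f ω = 1) ∧ (∀ ω ∈ J2 n, f ω = -(n : ℝ))) :
    ∀ ω ∈ Set.Ioc (0:ℝ) 1, f ω ≤ 1 := by
  intro ω hω
  rw [← iUnion_Iset] at hω
  obtain ⟨n, hn⟩ := Set.mem_iUnion.1 hω
  cases n with
  | zero => rw [Iset_zero] at hn; exact absurd hn (Set.notMem_empty ω)
  | succ m =>
    rw [Iset_union] at hn
    rcases hn with h | h
    · rw [(hf (m+1) (by omega)).1 ω h]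
    · rw [(hf (m+1) (by omega)).2 ω h]
      push_cast
      linarith [Nat.cast_nonneg (α := ℝ) m]

lemma superrep_iff (X₁ f : ℝ → ℝ)
    (hX₁ : ∀ n : ℕ, 1 ≤ n →
      (∀ ω ∈ J1 n, X₁ ω = (n : ℝ)) ∧ (∀ ω ∈ J2 n, X₁ ω = -((n : ℝ) ^ 2)))
    (hf : ∀ n : ℕ, 1 ≤ n →
      (∀ ω ∈ J1 n, f ω = 1) ∧ (∀ ω ∈ J2 n, f ω = -(n : ℝ))) (x : ℝ) :
    (∃ α : ℝ → ℝ, IsAdmissible X₁ α ∧ ∀ᵐ ω ∂Pmeas, f ω ≤ x + α ω * X₁ ω) ↔ 1 ≤ x := by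
  constructor
  · rintro ⟨α, ⟨⟨a, ha⟩, c, hc0, hc⟩, hsup⟩
    have key : ∀ m : ℕ, 1 - x ≤ c / ((m:ℝ) + 1) := by
      intro m
      have hJ1ne : Pmeas (J1 (m+1)) ≠ 0 := by
        rw [Pmeas_J1]
        exact (ENNReal.ofReal_pos.2 (by positivity)).ne'
      have hJ2ne : Pmeas (J2 (m+1)) ≠ 0 := by
        rw [Pmeas_J2]
        exact (ENNReal.ofReal_pos.2 (by positivity)).ne'
      obtain ⟨ω₁, hω₁, hp₁⟩ := exists_mem_of_ae hJ1ne hsup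
      obtain ⟨ω₂, hω₂, hp₂⟩ := exists_mem_of_ae hJ2ne hc
      have hα₁ : α ω₁ = a (m+1) := ha (m+1) (by omega) ω₁ (J1_subset_Iset m hω₁)
      have hα₂ : α ω₂ = a (m+1) := ha (m+1) (by omega) ω₂ (J2_subset_Iset m hω₂)
      rw [(hf (m+1) (by omega)).1 ω₁ hω₁, hα₁, (hX₁ (m+1) (by omega)).1 ω₁ hω₁] at hp₁
      rw [hα₂, (hX₁ (m+1) (by omega)).2 ω₂ hω₂] at hp₂
      set N : ℝ := ((m:ℝ) + 1) with hN_def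
      have hcast : ((m+1 : ℕ) : ℝ) = N := by push_cast; rfl
      rw [hcast] at hp₁ hp₂
      have hN : (0:ℝ) < N := by positivity
      rw [le_div_iff₀ hN]
      have h3 : 1 - x ≤ a (m+1) * N := by linarith
      have h4 : (1-x)*N ≤ (a (m+1) * N)*N := mul_le_mul_of_nonneg_right h3 hN.le
      have h5 : (a (m+1) * N)*N = a (m+1) * N^2 := by ring
      nlinarith
    by_contra hx
    push_neg at hx
    have h1x : 0 < 1 - x := by linarith
    obtain ⟨k, hk⟩ := exists_nat_gt (c / (1-x))
    have h6 : c / (1-x) < (k:ℝ) + 1 := by linarith [hk]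
    have h7 : c < (1-x) * ((k:ℝ)+1) := by
      rw [div_lt_iff₀ h1x] at h6; linarith
    have h8 := key k
    rw [le_div_iff₀ (by positivity : (0:ℝ) < (k:ℝ)+1)] at h8
    linarith
  · intro hx
    refine ⟨fun _ => 0, ⟨⟨fun _ => 0, fun n hn ω hω => rfl⟩, 0, le_rfl,
      ae_of_all _ (by intro ω; simp)⟩, ?_⟩
    filter_upwards [ae_mem_Ioc] with ω hω
    have := f_le_one hf ω hω
    simpa using by linarith

noncomputable def dzero : ℝ → ℝ := (Set.Ioc (2⁻¹:ℝ) 1).indicator (fun _ => (2:ℝ))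

noncomputable def Qzero : Measure ℝ := Pmeas.withDensity (fun ω => ENNReal.ofReal (dzero ω))

lemma dzero_ofReal (ω : ℝ) : ENNReal.ofReal (dzero ω)
    = (Set.Ioc (2⁻¹:ℝ) 1).indicator (fun _ => (2:ENNReal)) ω := by
  by_cases h : ω ∈ Set.Ioc (2⁻¹:ℝ) 1 <;>
    simp [dzero, Set.indicator_of_mem, Set.indicator_of_notMem, h]

lemma Qzero_prob : IsProbabilityMeasure Qzero := by
  constructor
  rw [Qzero, withDensity_apply _ MeasurableSet.univ, Measure.restrict_univ]
  have h1 : ∫⁻ ω, ENNReal.ofReal (dzero ω) ∂Pmeas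
      = ∫⁻ ω, (Set.Ioc (2⁻¹:ℝ) 1).indicator (fun _ => (2:ENNReal)) ω ∂Pmeas :=
    lintegral_congr dzero_ofReal
  rw [h1, lintegral_indicator measurableSet_Ioc, setLIntegral_const]
  have h2 : Pmeas (Set.Ioc (2⁻¹:ℝ) 1) = ENNReal.ofReal 2⁻¹ := by
    rw [Pmeas, Measure.restrict_apply measurableSet_Ioc,
      Set.inter_eq_left.2 (Set.Ioc_subset_Ioc (by norm_num) le_rfl), Real.volume_Ioc]
    norm_num
  rw [h2, show (2:ENNReal) = ENNReal.ofReal 2 by simp, ← ENNReal.ofReal_mul (by norm_num)]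
  norm_num

lemma Qzero_mem : Qzero ∈ SepD := by
  refine ⟨Qzero_prob, (fun n => if n = 1 then (2:ℝ) else 0),
    (fun n => if n = 1 then (2:ℝ) else 0), ?_, ?_, ?_, dzero, ?_, ?_, rfl⟩
  · intro n; dsimp only; split_ifs <;> norm_num
  · intro n; dsimp only; split_ifs <;> norm_num
  · intro n hn
    by_cases h : n = 1
    · subst h; norm_num
    · simp [h]
  · exact measurable_const.indicator measurableSet_Ioc
  · intro n hn
    obtain ⟨m, rfl⟩ : ∃ m, n = m + 1 := ⟨n - 1, by omega⟩
    cases m with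
    | zero =>
      constructor
      · intro ω hω
        rw [J1_succ] at hω
        simp only [pow_zero, inv_one] at hω
        have hmem : ω ∈ Set.Ioc (2⁻¹:ℝ) 1 := ⟨by linarith [hω.1], by linarith [hω.2]⟩
        simp [dzero, Set.indicator_of_mem hmem]
      · intro ω hω
        rw [J2_succ] at hω
        simp only [pow_zero, inv_one] at hω
        have hmem : ω ∈ Set.Ioc (2⁻¹:ℝ) 1 := ⟨by linarith [hω.1], hω.2⟩
        simp [dzero, Set.indicator_of_mem hmem]
    | succ k =>
      have hbound : ∀ ω ∈ Iset (k+1+1), ω ≤ 2⁻¹ := by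
        intro ω hω
        rw [Iset_succ] at hω
        have h1 : ((2:ℝ)^(k+1))⁻¹ ≤ 2⁻¹ := by
          apply inv_anti₀ (by norm_num)
          calc (2:ℝ) = 2^1 := (pow_one 2).symm
          _ ≤ 2^(k+1) := pow_le_pow_right₀ (by norm_num) (by omega)
        exact hω.2.trans h1
      constructor
      · intro ω hω
        have hnot : ω ∉ Set.Ioc (2⁻¹:ℝ) 1 := by
          intro hmem
          exact absurd (hbound ω (J1_subset_Iset _ hω)) (not_le.2 hmem.1)
        simp [dzero, Set.indicator_of_notMem hnot, (by omega : ¬ (k+1+1 = 1))]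
      · intro ω hω
        have hnot : ω ∉ Set.Ioc (2⁻¹:ℝ) 1 := by
          intro hmem
          exact absurd (hbound ω (J2_subset_Iset _ hω)) (not_le.2 hmem.1)
        simp [dzero, Set.indicator_of_notMem hnot, (by omega : ¬ (k+1+1 = 1))]


/-- Example 8 of Biagini–Frittelli: for the claim `f` equal to `1` on `J_n^1` and `-n` on
`J_n^2`: (i) `f ∈ L¹(Q)` and `E_Q[f] = 0` for every separating measure `Q`; (ii) `f - x`
is super-replicable by an admissible strategy iff `x ≥ 1`.  In particular the super
replication price of `f` is `1` while `sup_Q E_Q[f] = 0` over separating measures. -/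
theorem example8_claim_f
    (X₁ f : ℝ → ℝ)
    (hX₁ : ∀ n : ℕ, 1 ≤ n →
      (∀ ω ∈ J1 n, X₁ ω = (n : ℝ)) ∧ (∀ ω ∈ J2 n, X₁ ω = -((n : ℝ) ^ 2)))
    (hf : ∀ n : ℕ, 1 ≤ n →
      (∀ ω ∈ J1 n, f ω = 1) ∧ (∀ ω ∈ J2 n, f ω = -(n : ℝ))) :
    (∀ Q ∈ SepD, Integrable f Q ∧ ∫ ω, f ω ∂Q = 0) ∧
    (∀ x : ℝ,
      (∃ α : ℝ → ℝ, IsAdmissible X₁ α ∧ ∀ᵐ ω ∂Pmeas, f ω ≤ x + α ω * X₁ ω) ↔ 1 ≤ x) ∧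
    sInf {x : ℝ | ∃ α : ℝ → ℝ, IsAdmissible X₁ α ∧ ∀ᵐ ω ∂Pmeas, f ω ≤ x + α ω * X₁ ω}
      = 1 ∧
    sSup ((fun Q : Measure ℝ => ∫ ω, f ω ∂Q) '' SepD) = 0 := by
  refine ⟨sep_integral f hf, superrep_iff X₁ f hX₁ hf, ?_, ?_⟩
  · have hset : {x : ℝ | ∃ α : ℝ → ℝ, IsAdmissible X₁ α ∧
        ∀ᵐ ω ∂Pmeas, f ω ≤ x + α ω * X₁ ω} = Set.Ici 1 := by
      ext x
      rw [Set.mem_setOf_eq, superrep_iff X₁ f hX₁ hf x, Set.mem_Ici]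
    rw [hset, csInf_Ici]
  · have himg : (fun Q : Measure ℝ => ∫ ω, f ω ∂Q) '' SepD = {0} := by
      rw [Set.eq_singleton_iff_unique_mem]
      constructor
      · exact ⟨Qzero, Qzero_mem, (sep_integral f hf Qzero Qzero_mem).2⟩
      · rintro y ⟨Q, hQ, rfl⟩
        exact (sep_integral f hf Q hQ).2
    rw [himg, csSup_singleton]
end

section
/- For every real a > 0, setting b = (log 2)/a, the integral ∫₀^∞ e^t · (b/√(2πt³)) · exp(−(b + (a/2)t)²/(2t)) dt is finite if and only if a² ≥ 8. -/
open MeasureTheory Real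
open scoped ENNReal

private lemma sq_div_four_le_exp {x : ℝ} (hx : 0 ≤ x) : x ^ 2 / 4 ≤ Real.exp x := by
  have h1 : x / 2 + 1 ≤ Real.exp (x / 2) := Real.add_one_le_exp _
  have h2 : Real.exp x = Real.exp (x / 2) * Real.exp (x / 2) := by
    rw [← Real.exp_add]; ring_nf
  nlinarith [Real.exp_pos (x / 2)]

/-- The analytic core of Lemma 27(d) of Biagini–Frittelli: for `a > 0` and
`b = (log 2)/a`, the integral
`∫₀^∞ eᵗ · (b/√(2πt³)) · exp(−(b + (a/2)t)²/(2t)) dt`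
(of `eᵗ` against the density of the passage time of a Brownian motion with drift `−a/2`
to the level `b`) is finite iff `a² ≥ 8`. -/
theorem exp_integral_passage_time_finite_iff
    (a : ℝ) (ha : 0 < a) (b : ℝ) (hb : b = Real.log 2 / a) :
    (∫⁻ t in Set.Ioi (0 : ℝ),
        ENNReal.ofReal (Real.exp t * (b / Real.sqrt (2 * Real.pi * t ^ 3)) *
          Real.exp (-((b + (a / 2) * t) ^ 2 / (2 * t))))) < ⊤ ↔
      8 ≤ a ^ 2 := by
  have hb0 : 0 < b := by
    rw [hb]; exact div_pos (Real.log_pos (by norm_num)) ha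
  obtain ⟨c, hcdef⟩ : ∃ c : ℝ, c = 1 - a ^ 2 / 8 := ⟨_, rfl⟩
  obtain ⟨K, hKdef⟩ : ∃ K : ℝ, K = b * Real.exp (-(a * b / 2)) / Real.sqrt (2 * Real.pi) :=
    ⟨_, rfl⟩
  have hK : 0 < K := by
    rw [hKdef]
    apply div_pos (mul_pos hb0 (Real.exp_pos _))
    exact Real.sqrt_pos.mpr (by positivity)
  obtain ⟨g, hgdef⟩ : ∃ g : ℝ → ℝ,
      g = fun t => t ^ (-(3:ℝ)/2) * Real.exp (c * t - b ^ 2 / (2 * t)) := ⟨_, rfl⟩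
  have hgval : ∀ t : ℝ, g t = t ^ (-(3:ℝ)/2) * Real.exp (c * t - b ^ 2 / (2 * t)) := by
    intro t; rw [hgdef]
  have key : ∀ t ∈ Set.Ioi (0:ℝ),
      ENNReal.ofReal (Real.exp t * (b / Real.sqrt (2 * Real.pi * t ^ 3)) *
          Real.exp (-((b + (a / 2) * t) ^ 2 / (2 * t))))
        = ENNReal.ofReal K * ENNReal.ofReal (g t) := by
    intro t ht
    have ht : (0:ℝ) < t := ht
    rw [← ENNReal.ofReal_mul hK.le]
    congr 1
    have hsq : Real.sqrt (2 * Real.pi * t ^ 3) = Real.sqrt (2 * Real.pi) * t ^ ((3:ℝ)/2) := by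
      rw [Real.sqrt_mul (by positivity)]
      congr 1
      rw [Real.sqrt_eq_rpow, ← Real.rpow_natCast t 3, ← Real.rpow_mul ht.le]
      norm_num
    have hexp : Real.exp t * Real.exp (-((b + (a / 2) * t) ^ 2 / (2 * t)))
        = Real.exp (-(a * b / 2)) * Real.exp (c * t - b ^ 2 / (2 * t)) := by
      rw [← Real.exp_add, ← Real.exp_add]
      congr 1
      rw [hcdef]
      field_simp
      ring
    have hrp : t ^ (-(3:ℝ)/2) = (t ^ ((3:ℝ)/2))⁻¹ := by
      rw [← Real.rpow_neg ht.le]; norm_num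
    have hT : (0:ℝ) < t ^ ((3:ℝ)/2) := Real.rpow_pos_of_pos ht _
    have hS : (0:ℝ) < Real.sqrt (2 * Real.pi) := Real.sqrt_pos.mpr (by positivity)
    rw [hsq, hgval, hKdef, hrp]
    calc Real.exp t * (b / (Real.sqrt (2 * Real.pi) * t ^ ((3:ℝ)/2))) *
          Real.exp (-((b + (a / 2) * t) ^ 2 / (2 * t)))
        = b / Real.sqrt (2 * Real.pi) * (t ^ ((3:ℝ)/2))⁻¹ *
            (Real.exp t * Real.exp (-((b + (a / 2) * t) ^ 2 / (2 * t)))) := by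
          field_simp
      _ = b / Real.sqrt (2 * Real.pi) * (t ^ ((3:ℝ)/2))⁻¹ *
            (Real.exp (-(a * b / 2)) * Real.exp (c * t - b ^ 2 / (2 * t))) := by rw [hexp]
      _ = b * Real.exp (-(a * b / 2)) / Real.sqrt (2 * Real.pi) *
            ((t ^ ((3:ℝ)/2))⁻¹ * Real.exp (c * t - b ^ 2 / (2 * t))) := by ring
  rw [setLIntegral_congr_fun measurableSet_Ioi key,
    lintegral_const_mul' _ _ ENNReal.ofReal_ne_top]
  have hKE : ENNReal.ofReal K ≠ 0 := (ENNReal.ofReal_pos.mpr hK).ne'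
  have hiff : ∀ I : ℝ≥0∞, ENNReal.ofReal K * I < ⊤ ↔ I < ⊤ := by
    intro I
    constructor
    · intro h
      rcases ENNReal.mul_lt_top_iff.mp h with ⟨_, h2⟩ | h2 | h2
      · exact h2
      · exact absurd h2 hKE
      · simp [h2]
    · intro h
      exact ENNReal.mul_lt_top ENNReal.ofReal_lt_top h
  rw [hiff]
  constructor
  · -- finite → 8 ≤ a²
    intro h
    by_contra h8
    push_neg at h8
    have hc : 0 < c := by rw [hcdef]; linarith
    obtain ⟨ε, hεdef⟩ : ∃ ε : ℝ, ε = c ^ 2 / 4 * Real.exp (-(b ^ 2 / 2)) := ⟨_, rfl⟩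
    have hε : 0 < ε := by rw [hεdef]; positivity
    have hlow : ∀ t ∈ Set.Ioi (1:ℝ), ENNReal.ofReal ε ≤ ENNReal.ofReal (g t) := by
      intro t ht
      have ht1 : (1:ℝ) < t := ht
      have ht0 : (0:ℝ) < t := lt_trans one_pos ht1
      apply ENNReal.ofReal_le_ofReal
      have e1 : Real.exp (-(b ^ 2 / 2)) ≤ Real.exp (-(b ^ 2 / (2 * t))) := by
        apply Real.exp_le_exp.mpr
        have : b ^ 2 / (2 * t) ≤ b ^ 2 / 2 :=
          div_le_div_of_nonneg_left (by positivity) (by norm_num) (by linarith)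
        linarith
      have e2 : c ^ 2 * t ^ 2 / 4 ≤ Real.exp (c * t) := by
        have := sq_div_four_le_exp (mul_nonneg hc.le ht0.le)
        nlinarith
      have e3 : Real.exp (c * t - b ^ 2 / (2 * t))
          = Real.exp (c * t) * Real.exp (-(b ^ 2 / (2 * t))) := by
        rw [← Real.exp_add]; ring_nf
      have e4 : (c ^ 2 * t ^ 2 / 4) * Real.exp (-(b ^ 2 / 2))
          ≤ Real.exp (c * t) * Real.exp (-(b ^ 2 / (2 * t))) :=
        mul_le_mul e2 e1 (Real.exp_pos _).le (Real.exp_pos _).le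
      have hpow : t ^ (-(3:ℝ)/2) * t ^ 2 = t ^ ((1:ℝ)/2) := by
        rw [← Real.rpow_natCast t 2, ← Real.rpow_add ht0]
        norm_num
      have hpowpos : 0 < t ^ (-(3:ℝ)/2) := Real.rpow_pos_of_pos ht0 _
      have h12 : (1:ℝ) ≤ t ^ ((1:ℝ)/2) := Real.one_le_rpow ht1.le (by norm_num)
      have hmain : ε * t ^ ((1:ℝ)/2) ≤ g t := by
        rw [hgval]
        calc ε * t ^ ((1:ℝ)/2)
            = t ^ (-(3:ℝ)/2) * ((c ^ 2 * t ^ 2 / 4) * Real.exp (-(b ^ 2 / 2))) := by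
              rw [hεdef, ← hpow]; ring
          _ ≤ t ^ (-(3:ℝ)/2) * (Real.exp (c * t) * Real.exp (-(b ^ 2 / (2 * t)))) :=
              mul_le_mul_of_nonneg_left e4 hpowpos.le
          _ = t ^ (-(3:ℝ)/2) * Real.exp (c * t - b ^ 2 / (2 * t)) := by rw [e3]
      nlinarith [mul_le_mul_of_nonneg_left h12 hε.le]
    have htop : (⊤:ℝ≥0∞) ≤ ∫⁻ t in Set.Ioi (0:ℝ), ENNReal.ofReal (g t) := by
      calc (⊤:ℝ≥0∞) = ENNReal.ofReal ε * volume (Set.Ioi (1:ℝ)) := by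
            rw [Real.volume_Ioi, ENNReal.mul_top (ENNReal.ofReal_pos.mpr hε).ne']
        _ = ∫⁻ _ in Set.Ioi (1:ℝ), ENNReal.ofReal ε := (setLIntegral_const _ _).symm
        _ ≤ ∫⁻ t in Set.Ioi (1:ℝ), ENNReal.ofReal (g t) :=
            setLIntegral_mono' measurableSet_Ioi hlow
        _ ≤ ∫⁻ t in Set.Ioi (0:ℝ), ENNReal.ofReal (g t) :=
            lintegral_mono_set (Set.Ioi_subset_Ioi zero_le_one)
    exact absurd htop (not_le_of_gt h)
  · -- 8 ≤ a² → finite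
    intro h8
    have hc : c ≤ 0 := by rw [hcdef]; linarith
    rw [← Set.Ioc_union_Ioi_eq_Ioi (zero_le_one : (0:ℝ) ≤ 1),
      lintegral_union measurableSet_Ioi (Set.Ioc_disjoint_Ioi le_rfl)]
    apply ENNReal.add_lt_top.mpr
    constructor
    · -- near 0
      have hbd : ∀ t ∈ Set.Ioc (0:ℝ) 1, ENNReal.ofReal (g t) ≤ ENNReal.ofReal (16 / b ^ 4) := by
        intro t ht
        obtain ⟨ht0, ht1⟩ := ht
        apply ENNReal.ofReal_le_ofReal
        have hX : 0 < b ^ 2 / (2 * t) := by positivity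
        have h2 : (b ^ 2 / (2 * t)) ^ 2 / 4 ≤ Real.exp (b ^ 2 / (2 * t)) :=
          sq_div_four_le_exp hX.le
        have h4 : (Real.exp (b ^ 2 / (2 * t)))⁻¹ ≤ ((b ^ 2 / (2 * t)) ^ 2 / 4)⁻¹ :=
          inv_anti₀ (by positivity) h2
        have h5 : ((b ^ 2 / (2 * t)) ^ 2 / 4)⁻¹ = 16 * t ^ 2 / b ^ 4 := by
          field_simp; ring
        have hA : Real.exp (c * t - b ^ 2 / (2 * t)) ≤ 16 * t ^ 2 / b ^ 4 := by
          have hct : c * t ≤ 0 := mul_nonpos_of_nonpos_of_nonneg hc ht0.le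
          have h1 : Real.exp (c * t - b ^ 2 / (2 * t)) ≤ Real.exp (-(b ^ 2 / (2 * t))) := by
            apply Real.exp_le_exp.mpr; linarith
          calc Real.exp (c * t - b ^ 2 / (2 * t)) ≤ Real.exp (-(b ^ 2 / (2 * t))) := h1
            _ = (Real.exp (b ^ 2 / (2 * t)))⁻¹ := Real.exp_neg _
            _ ≤ ((b ^ 2 / (2 * t)) ^ 2 / 4)⁻¹ := h4
            _ = 16 * t ^ 2 / b ^ 4 := h5
        have hpow : t ^ (-(3:ℝ)/2) * t ^ 2 = t ^ ((1:ℝ)/2) := by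
          rw [← Real.rpow_natCast t 2, ← Real.rpow_add ht0]
          norm_num
        have hpowpos : 0 < t ^ (-(3:ℝ)/2) := Real.rpow_pos_of_pos ht0 _
        have h12 : t ^ ((1:ℝ)/2) ≤ 1 := Real.rpow_le_one ht0.le ht1 (by norm_num)
        rw [hgval]
        calc t ^ (-(3:ℝ)/2) * Real.exp (c * t - b ^ 2 / (2 * t))
            ≤ t ^ (-(3:ℝ)/2) * (16 * t ^ 2 / b ^ 4) :=
              mul_le_mul_of_nonneg_left hA hpowpos.le
          _ = (16 / b ^ 4) * t ^ ((1:ℝ)/2) := by rw [← hpow]; ring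
          _ ≤ (16 / b ^ 4) * 1 := mul_le_mul_of_nonneg_left h12 (by positivity)
          _ = 16 / b ^ 4 := mul_one _
      calc ∫⁻ t in Set.Ioc (0:ℝ) 1, ENNReal.ofReal (g t)
          ≤ ∫⁻ _ in Set.Ioc (0:ℝ) 1, ENNReal.ofReal (16 / b ^ 4) :=
            setLIntegral_mono' measurableSet_Ioc hbd
        _ = ENNReal.ofReal (16 / b ^ 4) * volume (Set.Ioc (0:ℝ) 1) := setLIntegral_const _ _
        _ < ⊤ := by
            rw [Real.volume_Ioc]
            exact ENNReal.mul_lt_top ENNReal.ofReal_lt_top ENNReal.ofReal_lt_top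
    · -- near ∞
      have hbd : ∀ t ∈ Set.Ioi (1:ℝ),
          ENNReal.ofReal (g t) ≤ ENNReal.ofReal (t ^ (-(3:ℝ)/2)) := by
        intro t ht
        have ht1 : (1:ℝ) < t := ht
        have ht0 : (0:ℝ) < t := lt_trans one_pos ht1
        apply ENNReal.ofReal_le_ofReal
        have hct : c * t ≤ 0 := mul_nonpos_of_nonpos_of_nonneg hc ht0.le
        have hb2 : 0 ≤ b ^ 2 / (2 * t) := by positivity
        have h1 : Real.exp (c * t - b ^ 2 / (2 * t)) ≤ 1 :=
          Real.exp_le_one_iff.mpr (by linarith)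
        rw [hgval]
        calc t ^ (-(3:ℝ)/2) * Real.exp (c * t - b ^ 2 / (2 * t))
            ≤ t ^ (-(3:ℝ)/2) * 1 :=
              mul_le_mul_of_nonneg_left h1 (Real.rpow_nonneg ht0.le _)
          _ = t ^ (-(3:ℝ)/2) := mul_one _
      calc ∫⁻ t in Set.Ioi (1:ℝ), ENNReal.ofReal (g t)
          ≤ ∫⁻ t in Set.Ioi (1:ℝ), ENNReal.ofReal (t ^ (-(3:ℝ)/2)) :=
            setLIntegral_mono' measurableSet_Ioi hbd
        _ < ⊤ := (integrableOn_Ioi_rpow_of_lt (by norm_num) one_pos).lintegral_lt_top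
end
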